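/- There exists an absolute constant C > 0 such that for every prime N, every function a : ℤ/Nℤ → ℂ, and every arithmetic progression P contained in the interval [N], one has |E_{n∈[N]} 1_P(n) · a(n)| ≤ C · ‖a‖_{U²(ℤ_N)}. -/

import Mathlib

open Finset

/-- The Gowers uniformity norm `‖a‖_{U^s(ℤ_N)}`, defined inductively. -/
noncomputable def gowersNorm (N : ℕ) [NeZero N] : ℕ → (ZMod N → ℂ) → ℝ
  | 0, a => ‖(∑ n : ZMod N, a n) / (N : ℂ)‖
  | 1, a => ‖(∑ n : ZMod N, a n) / (N : ℂ)‖
  | (s + 2), a =>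
      ((∑ t : ZMod N,
          gowersNorm N (s + 1) (fun n => a n * (starRingEnd ℂ) (a (n + t))) ^ 2 ^ (s + 1))
        / (N : ℝ)) ^ ((1 : ℝ) / 2 ^ (s + 2))


section AuxStmt5

open Complex ZMod

variable {N : ℕ} [NeZero N]

noncomputable def dftc (f : ZMod N → ℂ) (ξ : ZMod N) : ℂ :=
  ∑ n : ZMod N, stdAddChar (-(n * ξ)) * f n

lemma e_norm (x : ZMod N) : ‖ZMod.stdAddChar x‖ = 1 := by
  rw [ZMod.stdAddChar_apply, Circle.norm_coe]

lemma e_conj (x : ZMod N) : (starRingEnd ℂ) (ZMod.stdAddChar x) = ZMod.stdAddChar (-x) := by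
  rw [ZMod.stdAddChar_apply, ZMod.stdAddChar_apply, AddChar.map_neg_eq_inv,
    Circle.coe_inv_eq_conj]

lemma e_orth (x : ZMod N) :
    ∑ ξ : ZMod N, ZMod.stdAddChar (x * ξ) = if x = 0 then (N : ℂ) else 0 := by
  split_ifs with h
  · simp [h, Finset.card_univ]
  · exact AddChar.sum_eq_zero_of_ne_one (ZMod.isPrimitive_stdAddChar N h)

lemma pairing (f g : ZMod N → ℂ) :
    ∑ ξ : ZMod N, dftc f ξ * (starRingEnd ℂ) (dftc g ξ)
      = (N : ℂ) * ∑ n : ZMod N, f n * (starRingEnd ℂ) (g n) := by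
  have step : ∀ ξ : ZMod N, dftc f ξ * (starRingEnd ℂ) (dftc g ξ)
      = ∑ n : ZMod N, ∑ m : ZMod N,
          (f n * (starRingEnd ℂ) (g m)) * stdAddChar ((m - n) * ξ) := by
    intro ξ
    rw [dftc, dftc, map_sum, Finset.sum_mul_sum]
    refine Finset.sum_congr rfl fun n _ => Finset.sum_congr rfl fun m _ => ?_
    rw [map_mul, e_conj]
    have : ZMod.stdAddChar (-(n*ξ)) * ZMod.stdAddChar (-(-(m*ξ))) = stdAddChar ((m-n)*ξ) := by
      rw [← AddChar.map_add_eq_mul]; ring_nf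
    rw [mul_mul_mul_comm, this]; ring
  calc ∑ ξ, dftc f ξ * (starRingEnd ℂ) (dftc g ξ)
      = ∑ ξ : ZMod N, ∑ n : ZMod N, ∑ m : ZMod N,
          (f n * (starRingEnd ℂ) (g m)) * stdAddChar ((m - n) * ξ) :=
        Finset.sum_congr rfl fun ξ _ => step ξ
    _ = ∑ n : ZMod N, ∑ m : ZMod N,
          (f n * (starRingEnd ℂ) (g m)) * ∑ ξ : ZMod N, stdAddChar ((m - n) * ξ) := by
        rw [Finset.sum_comm]
        refine Finset.sum_congr rfl fun n _ => ?_
        rw [Finset.sum_comm]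
        refine Finset.sum_congr rfl fun m _ => ?_
        rw [Finset.mul_sum]
    _ = ∑ n : ZMod N, ∑ m : ZMod N,
          (f n * (starRingEnd ℂ) (g m)) * (if m = n then (N:ℂ) else 0) := by
        refine Finset.sum_congr rfl fun n _ => Finset.sum_congr rfl fun m _ => ?_
        rw [e_orth]
        congr 1
        simp [sub_eq_zero]
    _ = (N : ℂ) * ∑ n : ZMod N, f n * (starRingEnd ℂ) (g n) := by
        rw [Finset.mul_sum]
        refine Finset.sum_congr rfl fun n _ => ?_
        simp only [mul_ite, mul_zero, Finset.sum_ite_eq', Finset.mem_univ, if_true]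
        ring
    _ = _ := rfl

lemma parseval_norm (f : ZMod N → ℂ) :
    ∑ ξ : ZMod N, ‖dftc f ξ‖ ^ 2 = (N : ℝ) * ∑ n : ZMod N, ‖f n‖ ^ 2 := by
  have := pairing f f
  have h1 : ∀ z : ℂ, z * (starRingEnd ℂ) z = ((‖z‖ ^ 2 : ℝ) : ℂ) := by
    intro z; rw [Complex.mul_conj]; norm_cast; rw [Complex.normSq_eq_norm_sq]
  simp only [h1] at this
  have : ((∑ ξ : ZMod N, ‖dftc f ξ‖ ^ 2 : ℝ) : ℂ) = (((N:ℝ) * ∑ n : ZMod N, ‖f n‖ ^ 2 : ℝ) : ℂ) := by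
    push_cast
    push_cast at this
    exact this
  exact_mod_cast this

lemma dftc_corr (a : ZMod N → ℂ) (ξ : ZMod N) :
    dftc (fun t => ∑ n : ZMod N, a n * (starRingEnd ℂ) (a (n + t))) (-ξ)
      = dftc a ξ * (starRingEnd ℂ) (dftc a ξ) := by
  have conj_dftc : (starRingEnd ℂ) (dftc a ξ)
      = ∑ m : ZMod N, stdAddChar (m * ξ) * (starRingEnd ℂ) (a m) := by
    rw [dftc, map_sum]
    refine Finset.sum_congr rfl fun m _ => ?_
    rw [map_mul, e_conj, neg_neg]
  rw [conj_dftc, dftc]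
  calc ∑ t : ZMod N, stdAddChar (-(t * -ξ)) * ∑ n : ZMod N, a n * (starRingEnd ℂ) (a (n + t))
      = ∑ t : ZMod N, ∑ n : ZMod N, stdAddChar (t * ξ) * (a n * (starRingEnd ℂ) (a (n + t))) := by
        refine Finset.sum_congr rfl fun t _ => ?_
        have h : -(t * -ξ) = t * ξ := by ring
        rw [h, Finset.mul_sum]
    _ = ∑ n : ZMod N, ∑ t : ZMod N, stdAddChar (t * ξ) * (a n * (starRingEnd ℂ) (a (n + t))) :=
        Finset.sum_comm
    _ = ∑ n : ZMod N, ∑ m : ZMod N,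
          stdAddChar (-(n * ξ)) * a n * (stdAddChar (m * ξ) * (starRingEnd ℂ) (a m)) := by
        refine Finset.sum_congr rfl fun n _ => ?_
        refine Fintype.sum_bijective (fun t => n + t) (Equiv.addLeft n).bijective _ _ fun t => ?_
        have : ((n + t) - n) = t := by ring
        have he : stdAddChar (-(n*ξ)) * stdAddChar ((n+t)*ξ) = stdAddChar (t * ξ) := by
          rw [← AddChar.map_add_eq_mul]; ring_nf
        rw [← he]; ring
    _ = _ := by
        rw [dftc, Finset.sum_mul_sum]

lemma gowers_eq (a : ZMod N → ℂ) :
    gowersNorm N 2 a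
      = ((∑ ξ : ZMod N, ‖dftc a ξ‖ ^ 4) / (N : ℝ) ^ 4) ^ ((1 : ℝ) / 4) := by
  have hN : (0:ℝ) < N := by exact_mod_cast Nat.pos_of_ne_zero (NeZero.ne N)
  have h2 : gowersNorm N 2 a
      = ((∑ t : ZMod N,
          gowersNorm N 1 (fun n => a n * (starRingEnd ℂ) (a (n + t))) ^ 2 ^ 1)
        / (N : ℝ)) ^ ((1 : ℝ) / 2 ^ 2) := rfl
  set A : ZMod N → ℂ := fun t => ∑ n : ZMod N, a n * (starRingEnd ℂ) (a (n + t)) with hA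
  set S : ℝ := ∑ ξ : ZMod N, ‖dftc a ξ‖ ^ 4 with hS
  have g1 : ∀ t : ZMod N,
      gowersNorm N 1 (fun n => a n * (starRingEnd ℂ) (a (n + t)))
        = ‖A t‖ / N := by
    intro t
    show ‖(∑ n : ZMod N, a n * (starRingEnd ℂ) (a (n + t))) / (N:ℂ)‖ = _
    rw [norm_div, Complex.norm_natCast]
  have key : (N:ℝ) * ∑ t : ZMod N, ‖A t‖ ^ 2 = S := by
    rw [← parseval_norm A, hS]
    refine Fintype.sum_equiv (Equiv.neg (ZMod N)) _ _ fun ξ => ?_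
    have hc := dftc_corr a (-ξ)
    rw [neg_neg] at hc
    rw [Equiv.neg_apply, hc, norm_mul, RCLike.norm_conj]
    ring
  have hsum : ∑ t : ZMod N, ‖A t‖ ^ 2 = S / N := by
    rw [eq_div_iff hN.ne']; rw [← key]; ring
  rw [h2]
  congr 1
  · rw [Finset.sum_congr rfl fun t _ => by rw [g1 t]]
    have h3 : ∑ t : ZMod N, (‖A t‖ / (N:ℝ)) ^ 2 ^ 1 = (∑ t : ZMod N, ‖A t‖ ^ 2) / (N:ℝ)^2 :=
      calc ∑ t : ZMod N, (‖A t‖ / (N:ℝ)) ^ 2 ^ 1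
          = ∑ t : ZMod N, ‖A t‖ ^ 2 / (N:ℝ)^2 :=
            Finset.sum_congr rfl fun t _ => by rw [pow_one, div_pow]
        _ = (∑ t : ZMod N, ‖A t‖ ^ 2) / (N:ℝ)^2 := by rw [← Finset.sum_div]
    rw [h3, hsum]
    have h4 : (N:ℝ)^4 = N * N^2 * N := by ring
    rw [h4, ← div_div, ← div_div]
  · norm_num

lemma gowers_rpow (a : ZMod N → ℂ) :
    (∑ ξ : ZMod N, ‖dftc a ξ‖ ^ 4) ^ ((1 : ℝ) / 4) = (N : ℝ) * gowersNorm N 2 a := by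
  have hN : (0:ℝ) < N := by exact_mod_cast Nat.pos_of_ne_zero (NeZero.ne N)
  have hS : (0:ℝ) ≤ ∑ ξ : ZMod N, ‖dftc a ξ‖ ^ 4 :=
    Finset.sum_nonneg fun ξ _ => by positivity
  rw [gowers_eq, Real.div_rpow hS (by positivity)]
  have h4 : ((N:ℝ) ^ (4:ℕ)) ^ ((1:ℝ)/4) = (N:ℝ) := by
    rw [← Real.rpow_natCast (N:ℝ) 4, ← Real.rpow_mul hN.le]
    norm_num
  rw [h4]
  field_simp

lemma telescope43 (i : ℕ) :
    (1 / (i + 2 : ℝ)) ^ ((4:ℝ)/3)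
      ≤ 3 * ((1/(i+1:ℝ)) ^ ((1:ℝ)/3) - (1/(i+2:ℝ)) ^ ((1:ℝ)/3)) := by
  set u : ℝ := i + 1 with hu
  set v : ℝ := i + 2 with hv
  have hu0 : (0:ℝ) < u := by positivity
  have hv0 : (0:ℝ) < v := by positivity
  have hu1 : (1:ℝ) ≤ u := by simp [hu]
  have hvu : v = u + 1 := by rw [hu, hv]; ring
  set r : ℝ := (v/u) ^ ((1:ℝ)/3) with hr
  have hr1 : (1:ℝ) ≤ r := by
    apply Real.one_le_rpow
    · rw [le_div_iff₀ hu0]; linarith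
    · norm_num
  have hr3 : u * r ^ (3:ℕ) = v := by
    rw [hr, ← Real.rpow_natCast ((v/u) ^ ((1:ℝ)/3)) 3, ← Real.rpow_mul (by positivity)]
    norm_num
    field_simp
  have key : 1 ≤ 3 * v * (r - 1) := by
    nlinarith [mul_nonneg (mul_nonneg hu0.le (sq_nonneg (r-1)))
      (by nlinarith : (0:ℝ) ≤ 3*r^2 + 2*r + 1)]
  have ha : (1/v) ^ ((4:ℝ)/3) = (1/v) ^ ((1:ℝ)/3) * (1/v) := by
    rw [show (4:ℝ)/3 = 1/3 + 1 by norm_num, Real.rpow_add (by positivity), Real.rpow_one]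
  have hb : (1/u) ^ ((1:ℝ)/3) = r * (1/v) ^ ((1:ℝ)/3) := by
    rw [hr, ← Real.mul_rpow (by positivity) (by positivity)]
    congr 1
    field_simp
  rw [ha, hb]
  have hw : (0:ℝ) < (1/v) ^ ((1:ℝ)/3) := Real.rpow_pos_of_pos (by positivity) _
  have hdiv : 1/v ≤ 3 * (r - 1) := by
    rw [div_le_iff₀ hv0]
    nlinarith
  nlinarith [mul_le_mul_of_nonneg_left hdiv hw.le]

lemma zeta43 (M : ℕ) : ∑ m ∈ Finset.Icc 1 M, (1/(m:ℝ)) ^ ((4:ℝ)/3) ≤ 4 := by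
  have hIcc : ∑ m ∈ Finset.Icc 1 M, (1/(m:ℝ)) ^ ((4:ℝ)/3)
      = ∑ i ∈ Finset.range M, (1/((i:ℝ)+1)) ^ ((4:ℝ)/3) := by
    rw [show Finset.Icc 1 M = Finset.Ico 1 (M+1) by rw [Finset.Ico_add_one_right_eq_Icc],
      Finset.sum_Ico_eq_sum_range]
    simp only [Nat.add_sub_cancel]
    refine Finset.sum_congr rfl fun i _ => ?_
    push_cast
    ring_nf
  rw [hIcc]
  cases M with
  | zero => simp
  | succ K =>
    rw [Finset.sum_range_succ']
    have hax : (1/(((0:ℕ):ℝ)+1)) ^ ((4:ℝ)/3) = 1 := by norm_num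
    have h1 : ∑ i ∈ Finset.range K, (1/(((i+1:ℕ):ℝ)+1)) ^ ((4:ℝ)/3)
        ≤ ∑ i ∈ Finset.range K,
            3 * ((1/((i:ℝ)+1)) ^ ((1:ℝ)/3) - (1/((i:ℝ)+2)) ^ ((1:ℝ)/3)) := by
      refine Finset.sum_le_sum fun i _ => ?_
      have := telescope43 i
      convert this using 3 <;> [rfl; (push_cast; ring)]
    have h2 : ∑ i ∈ Finset.range K,
          3 * ((1/((i:ℝ)+1)) ^ ((1:ℝ)/3) - (1/((i:ℝ)+2)) ^ ((1:ℝ)/3))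
        = 3 * ((1/((0:ℝ)+1)) ^ ((1:ℝ)/3) - (1/((K:ℝ)+1)) ^ ((1:ℝ)/3)) := by
      rw [← Finset.mul_sum]
      congr 1
      have := Finset.sum_range_sub' (fun i => (1/((i:ℝ)+1)) ^ ((1:ℝ)/3)) K
      convert this using 2 <;> push_cast <;> ring_nf
    have h3 : (0:ℝ) ≤ (1/((K:ℝ)+1)) ^ ((1:ℝ)/3) := Real.rpow_nonneg (by positivity) _
    have h4 : (1/((0:ℝ)+1)) ^ ((1:ℝ)/3) = 1 := by norm_num
    rw [hax]
    have := h1.trans (le_of_eq h2)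
    rw [h4] at this
    linarith

lemma norm_one_sub_exp {v n : ℕ} (hv : 1 ≤ v) (hvn : 2*v ≤ n) :
    2*(v:ℝ)/n ≤ ‖1 - Complex.exp (2*Real.pi*Complex.I*v/n)‖ := by
  have hn : 0 < n := by omega
  have hn' : (0:ℝ) < n := by exact_mod_cast hn
  have hv' : (0:ℝ) < v := by exact_mod_cast hv
  set θ : ℝ := 2*Real.pi*v/n with hθ
  have hpi := Real.pi_pos
  have hθpos : 0 < θ := by positivity
  have hθle : θ ≤ Real.pi := by
    rw [hθ, div_le_iff₀ hn']
    have : (2:ℝ)*v ≤ n := by exact_mod_cast hvn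
    nlinarith
  have hexp : Complex.exp (2*Real.pi*Complex.I*v/n) = Complex.exp ((θ:ℂ)*Complex.I) := by
    congr 1
    rw [hθ]
    push_cast
    ring
  rw [hexp, Complex.exp_mul_I]
  have hgoal : 2*(v:ℝ)/n = θ * (2 / (2*Real.pi)) := by
    rw [hθ]; field_simp
  set z : ℂ := 1 - (Complex.cos θ + Complex.sin θ * Complex.I) with hz
  have hre : z.re = 1 - Real.cos θ := by
    simp [hz, Complex.cos_ofReal_re]
  have him : z.im = -Real.sin θ := by
    simp [hz, Complex.sin_ofReal_re]
  rcases le_or_gt θ (Real.pi/2) with hc | hc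
  · have hsin : 2/Real.pi * θ ≤ Real.sin θ := Real.mul_le_sin hθpos.le hc
    have : Real.sin θ ≤ ‖z‖ := by
      calc Real.sin θ = |z.im| := by
            rw [him, abs_neg,
              _root_.abs_of_nonneg (Real.sin_nonneg_of_nonneg_of_le_pi hθpos.le hθle)]
        _ ≤ ‖z‖ := Complex.abs_im_le_norm z
        _ = ‖z‖ := rfl
    have h24 : 2*(v:ℝ)/n ≤ 2/Real.pi * θ := by
      have he : 2/Real.pi * θ = 4*(v:ℝ)/n := by rw [hθ]; field_simp; ring
      rw [he, div_le_div_iff₀ hn' hn']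
      nlinarith
    linarith
  · have hcos : Real.cos θ ≤ 0 :=
      Real.cos_nonpos_of_pi_div_two_le_of_le hc.le (by linarith)
    have h1 : (1:ℝ) ≤ ‖z‖ := by
      calc (1:ℝ) ≤ 1 - Real.cos θ := by linarith
        _ = |z.re| := by
              rw [hre, _root_.abs_of_nonneg (by nlinarith [Real.cos_le_one θ] : (0:ℝ) ≤ 1 - Real.cos θ)]
        _ ≤ ‖z‖ := Complex.abs_re_le_norm z
        _ = ‖z‖ := rfl
    have : 2*(v:ℝ)/n ≤ 1 := by
      rw [div_le_one hn']
      exact_mod_cast hvn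
    linarith

lemma geom_bound {ω : ℂ} (hω : ‖ω‖ = 1) (hne : ω ≠ 1) (L : ℕ) :
    ‖∑ k ∈ Finset.range L, ω ^ k‖ ≤ 2 / ‖1 - ω‖ := by
  have hpos : 0 < ‖1 - ω‖ := by
    rw [norm_pos_iff, sub_ne_zero]
    exact fun h => hne h.symm
  rw [geom_sum_eq hne, norm_div, norm_sub_rev ω 1]
  rw [div_le_div_iff_of_pos_right hpos]
  calc ‖ω ^ L - 1‖ ≤ ‖ω ^ L‖ + ‖(1:ℂ)‖ := norm_sub_le _ _
    _ = 2 := by rw [norm_pow, hω, norm_one, one_pow]; norm_num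

lemma norm_one_sub_e {y : ZMod N} (hy : y ≠ 0) :
    2 * ((min y.val (N - y.val) : ℕ) : ℝ) / N ≤ ‖1 - ZMod.stdAddChar y‖ := by
  have hvpos : 0 < y.val := ZMod.val_pos.2 hy
  have hvlt : y.val < N := ZMod.val_lt y
  have hstd : ∀ x : ZMod N, ZMod.stdAddChar x
      = Complex.exp (2*Real.pi*Complex.I*x.val/N) := fun x => by
    rw [ZMod.stdAddChar_apply, ZMod.toCircle_apply]
  rcases le_or_gt (2 * y.val) N with hc | hc
  · have hmin : min y.val (N - y.val) = y.val := by omega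
    rw [hmin, hstd]
    exact norm_one_sub_exp hvpos hc
  · have hmin : min y.val (N - y.val) = N - y.val := by omega
    have hconj : ‖1 - ZMod.stdAddChar y‖ = ‖1 - ZMod.stdAddChar (-y)‖ := by
      rw [show (1 : ℂ) - ZMod.stdAddChar (-y) = (starRingEnd ℂ) (1 - ZMod.stdAddChar y) by
        rw [map_sub, map_one, e_conj], RCLike.norm_conj]
    have hnegval : (-y).val = N - y.val := by
      rw [ZMod.neg_val, if_neg hy]
    rw [hmin, hconj, hstd, hnegval]
    exact norm_one_sub_exp (by omega) (by omega)

lemma reidx_val (G : ℕ → ℝ) :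
    ∑ η ∈ Finset.univ.erase (0 : ZMod N), G η.val = ∑ v ∈ Finset.Icc 1 (N-1), G v := by
  have hN1 : 1 ≤ N := Nat.one_le_iff_ne_zero.2 (NeZero.ne N)
  refine Finset.sum_nbij' (fun η => η.val) (fun v => (v : ZMod N)) ?_ ?_ ?_ ?_ ?_
  · intro η hη
    rw [Finset.mem_erase] at hη
    have h1 := ZMod.val_lt η
    have h2 := ZMod.val_pos.2 hη.1
    simp only [Finset.mem_Icc]
    omega
  · intro v hv
    rw [Finset.mem_Icc] at hv
    rw [Finset.mem_erase]
    refine ⟨?_, Finset.mem_univ _⟩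
    intro h
    have h' : ((v : ℕ) : ZMod N) = 0 := h
    have h2 := congrArg ZMod.val h'
    rw [ZMod.val_cast_of_lt (by omega), ZMod.val_zero] at h2
    omega
  · intro η _; exact ZMod.natCast_zmod_val η
  · intro v hv
    rw [Finset.mem_Icc] at hv
    exact ZMod.val_cast_of_lt (by omega)
  · intro η _; rfl

lemma reflect_Icc (G : ℕ → ℝ) :
    ∑ v ∈ Finset.Icc 1 (N-1), G (N - v) = ∑ v ∈ Finset.Icc 1 (N-1), G v := by
  refine Finset.sum_nbij' (fun v => N - v) (fun v => N - v) ?_ ?_ ?_ ?_ ?_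
  · intro v hv; simp only [Finset.mem_Icc] at hv ⊢; omega
  · intro v hv; simp only [Finset.mem_Icc] at hv ⊢; omega
  · intro v hv; simp only [Finset.mem_Icc] at hv; omega
  · intro v hv; simp only [Finset.mem_Icc] at hv; omega
  · intro v _; rfl

lemma sum_NdivV (hN1 : 1 ≤ N) :
    ∑ v ∈ Finset.Icc 1 (N-1), ((N:ℝ)/(v:ℝ)) ^ ((4:ℝ)/3) ≤ 4 * (N:ℝ) ^ ((4:ℝ)/3) := by
  have h1 : ∀ v ∈ Finset.Icc 1 (N-1), ((N:ℝ)/(v:ℝ)) ^ ((4:ℝ)/3)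
      = (N:ℝ) ^ ((4:ℝ)/3) * (1/(v:ℝ)) ^ ((4:ℝ)/3) := by
    intro v hv
    rw [← Real.mul_rpow (by positivity) (by positivity)]
    congr 1
    ring
  rw [Finset.sum_congr rfl h1, ← Finset.mul_sum]
  have h2 := zeta43 (N-1)
  have h3 : (0:ℝ) ≤ (N:ℝ) ^ ((4:ℝ)/3) := by positivity
  nlinarith

lemma dft_AP_bound (hN : N.Prime) (x₀ δ : ZMod N) (hδ : δ ≠ 0) (L : ℕ) (hL : L ≤ N) :
    ∑ ξ : ZMod N, ‖∑ x ∈ (Finset.range L).image (fun k : ℕ => x₀ + (k : ZMod N) * δ),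
        ZMod.stdAddChar (-(x * ξ))‖ ^ ((4:ℝ)/3) ≤ 9 * (N:ℝ) ^ ((4:ℝ)/3) := by
  haveI := Fact.mk hN
  have hN1 : 1 ≤ N := hN.one_lt.le
  have hNr : (0:ℝ) < N := by exact_mod_cast hN.pos
  have hinj : Set.InjOn (fun k : ℕ => x₀ + (k : ZMod N) * δ) (Finset.range L) := by
    intro k₁ hk₁ k₂ hk₂ h
    simp only [Finset.coe_range, Set.mem_Iio] at hk₁ hk₂
    have h2 : (k₁ : ZMod N) * δ = (k₂ : ZMod N) * δ := by
      have := add_left_cancel h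
      exact this
    have h3 : (k₁ : ZMod N) = (k₂ : ZMod N) := mul_right_cancel₀ hδ h2
    rw [ZMod.natCast_eq_natCast_iff'] at h3
    rw [Nat.mod_eq_of_lt (by omega), Nat.mod_eq_of_lt (by omega)] at h3
    exact h3
  have hsum : ∀ ξ : ZMod N,
      ∑ x ∈ (Finset.range L).image (fun k : ℕ => x₀ + (k : ZMod N) * δ),
          ZMod.stdAddChar (-(x * ξ))
        = ZMod.stdAddChar (-(x₀ * ξ)) *
            ∑ k ∈ Finset.range L, (ZMod.stdAddChar (-(δ * ξ))) ^ k := by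
    intro ξ
    rw [Finset.sum_image hinj, Finset.mul_sum]
    refine Finset.sum_congr rfl fun k _ => ?_
    rw [← AddChar.map_nsmul_eq_pow, ← AddChar.map_add_eq_mul]
    congr 1
    rw [nsmul_eq_mul]
    push_cast
    ring
  have hnorm : ∀ ξ : ZMod N,
      ‖∑ x ∈ (Finset.range L).image (fun k : ℕ => x₀ + (k : ZMod N) * δ),
          ZMod.stdAddChar (-(x * ξ))‖
        = ‖∑ k ∈ Finset.range L, (ZMod.stdAddChar (-(δ * ξ))) ^ k‖ := by
    intro ξ
    rw [hsum, norm_mul, e_norm, one_mul]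
  -- split off ξ = 0
  rw [← Finset.sum_erase_add _ _ (Finset.mem_univ (0 : ZMod N))]
  have hzero : ‖∑ x ∈ (Finset.range L).image (fun k : ℕ => x₀ + (k : ZMod N) * δ),
      ZMod.stdAddChar (-(x * 0))‖ ^ ((4:ℝ)/3) ≤ (N:ℝ) ^ ((4:ℝ)/3) := by
    refine Real.rpow_le_rpow (norm_nonneg _) ?_ (by norm_num)
    rw [hnorm]
    calc ‖∑ k ∈ Finset.range L, (ZMod.stdAddChar (-(δ * 0))) ^ k‖
        ≤ ∑ k ∈ Finset.range L, ‖(ZMod.stdAddChar (-(δ * 0))) ^ k‖ := norm_sum_le _ _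
      _ = ∑ k ∈ Finset.range L, 1 := by
          refine Finset.sum_congr rfl fun k _ => ?_
          rw [norm_pow, e_norm, one_pow]
      _ = L := by simp
      _ ≤ (N:ℝ) := by exact_mod_cast hL
  have hterm : ∀ ξ ∈ Finset.univ.erase (0 : ZMod N),
      ‖∑ x ∈ (Finset.range L).image (fun k : ℕ => x₀ + (k : ZMod N) * δ),
          ZMod.stdAddChar (-(x * ξ))‖ ^ ((4:ℝ)/3)
        ≤ ((N:ℝ)/(((-(δ * ξ)).val : ℕ) : ℝ)) ^ ((4:ℝ)/3)
          + ((N:ℝ)/((N - (-(δ * ξ)).val : ℕ) : ℝ)) ^ ((4:ℝ)/3) := by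
    intro ξ hξ
    rw [Finset.mem_erase] at hξ
    set y : ZMod N := -(δ * ξ) with hy
    have hyne : y ≠ 0 := by
      rw [hy, neg_ne_zero]
      exact mul_ne_zero hδ hξ.1
    have hyv1 : 1 ≤ y.val := ZMod.val_pos.2 hyne
    have hyvN : y.val < N := ZMod.val_lt y
    have hωne : ZMod.stdAddChar y ≠ 1 := by
      intro h
      exact hyne (ZMod.injective_stdAddChar (h.trans (AddChar.map_zero_eq_one _).symm))
    set m : ℕ := min y.val (N - y.val) with hmdef
    have hmin1 : 1 ≤ m := by omega
    have hminr : (0:ℝ) < (m : ℝ) := by exact_mod_cast hmin1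
    have hb : ‖∑ k ∈ Finset.range L, (ZMod.stdAddChar y) ^ k‖ ≤ (N:ℝ) / (m : ℝ) := by
      calc ‖∑ k ∈ Finset.range L, (ZMod.stdAddChar y) ^ k‖
          ≤ 2 / ‖1 - ZMod.stdAddChar y‖ := geom_bound (e_norm y) hωne L
        _ ≤ 2 / (2 * (m : ℝ) / N) :=
            div_le_div_of_nonneg_left (by norm_num) (by positivity) (norm_one_sub_e hyne)
        _ = (N:ℝ) / (m : ℝ) := by field_simp
    have hble : ‖∑ k ∈ Finset.range L, (ZMod.stdAddChar y) ^ k‖ ^ ((4:ℝ)/3)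
        ≤ ((N:ℝ) / (m : ℝ)) ^ ((4:ℝ)/3) :=
      Real.rpow_le_rpow (norm_nonneg _) hb (by norm_num)
    rw [hnorm]
    refine hble.trans ?_
    rcases min_cases y.val (N - y.val) with ⟨hm, _⟩ | ⟨hm, _⟩ <;> rw [hmdef, hm]
    · have : (0:ℝ) ≤ ((N:ℝ)/((N - y.val : ℕ) : ℝ)) ^ ((4:ℝ)/3) := by positivity
      linarith
    · have : (0:ℝ) ≤ ((N:ℝ)/((y.val : ℕ) : ℝ)) ^ ((4:ℝ)/3) := by positivity
      linarith
  have hmain : ∑ ξ ∈ Finset.univ.erase (0 : ZMod N),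
      ‖∑ x ∈ (Finset.range L).image (fun k : ℕ => x₀ + (k : ZMod N) * δ),
          ZMod.stdAddChar (-(x * ξ))‖ ^ ((4:ℝ)/3) ≤ 8 * (N:ℝ) ^ ((4:ℝ)/3) := by
    calc ∑ ξ ∈ Finset.univ.erase (0 : ZMod N),
        ‖∑ x ∈ (Finset.range L).image (fun k : ℕ => x₀ + (k : ZMod N) * δ),
            ZMod.stdAddChar (-(x * ξ))‖ ^ ((4:ℝ)/3)
        ≤ ∑ ξ ∈ Finset.univ.erase (0 : ZMod N),
            (((N:ℝ)/(((-(δ * ξ)).val : ℕ) : ℝ)) ^ ((4:ℝ)/3)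
              + ((N:ℝ)/((N - (-(δ * ξ)).val : ℕ) : ℝ)) ^ ((4:ℝ)/3)) :=
          Finset.sum_le_sum hterm
      _ = ∑ η ∈ Finset.univ.erase (0 : ZMod N),
            (((N:ℝ)/((η.val : ℕ) : ℝ)) ^ ((4:ℝ)/3)
              + ((N:ℝ)/((N - η.val : ℕ) : ℝ)) ^ ((4:ℝ)/3)) := by
          refine Finset.sum_nbij' (fun ξ => -(δ * ξ)) (fun η => -(δ⁻¹ * η)) ?_ ?_ ?_ ?_ ?_
          · intro ξ hξ
            rw [Finset.mem_erase] at hξ ⊢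
            exact ⟨by rw [neg_ne_zero]; exact mul_ne_zero hδ hξ.1, Finset.mem_univ _⟩
          · intro η hη
            rw [Finset.mem_erase] at hη ⊢
            exact ⟨by rw [neg_ne_zero]; exact mul_ne_zero (inv_ne_zero hδ) hη.1,
              Finset.mem_univ _⟩
          · intro ξ _
            field_simp
          · intro η _
            field_simp
          · intro ξ _; rfl
      _ = ∑ v ∈ Finset.Icc 1 (N-1),
            (((N:ℝ)/((v : ℕ) : ℝ)) ^ ((4:ℝ)/3) + ((N:ℝ)/((N - v : ℕ) : ℝ)) ^ ((4:ℝ)/3)) :=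
          reidx_val (N := N) (fun w => ((N:ℝ)/((w : ℕ) : ℝ)) ^ ((4:ℝ)/3)
            + ((N:ℝ)/((N - w : ℕ) : ℝ)) ^ ((4:ℝ)/3))
      _ = ∑ v ∈ Finset.Icc 1 (N-1), ((N:ℝ)/((v : ℕ) : ℝ)) ^ ((4:ℝ)/3)
          + ∑ v ∈ Finset.Icc 1 (N-1), ((N:ℝ)/((N - v : ℕ) : ℝ)) ^ ((4:ℝ)/3) :=
          Finset.sum_add_distrib
      _ ≤ 8 * (N:ℝ) ^ ((4:ℝ)/3) := by
          have hrefl := reflect_Icc (N := N) (fun v => ((N:ℝ)/((v : ℕ) : ℝ)) ^ ((4:ℝ)/3))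
          have h1 : ∑ v ∈ Finset.Icc 1 (N-1), ((N:ℝ)/((v : ℕ) : ℝ)) ^ ((4:ℝ)/3)
              ≤ 4 * (N:ℝ) ^ ((4:ℝ)/3) := sum_NdivV hN1
          rw [hrefl]
          linarith
  linarith

end AuxStmt5

open Complex ZMod

/-- There is an absolute constant `C > 0` so that for every prime `N`, every
`a : ℤ/Nℤ → ℂ`, and every arithmetic progression `P ⊆ [N]` (with first term `a₀`,
common difference `d` and length `L`), one has
`|E_{n∈[N]} 1_P(n) a(n)| ≤ C ‖a‖_{U²(ℤ_N)}`. -/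
theorem stmt_5 :
    ∃ C : ℝ, 0 < C ∧
      ∀ (N : ℕ) [NeZero N], N.Prime →
        ∀ (a : ZMod N → ℂ) (a₀ d L : ℕ),
          (∀ k < L, a₀ + k * d ∈ Finset.Icc 1 N) →
          ‖(∑ n ∈ Finset.Icc 1 N,
              if n ∈ (Finset.range L).image (fun k => a₀ + k * d) then a (n : ZMod N) else 0)
            / (N : ℂ)‖ ≤ C * gowersNorm N 2 a := by
  refine ⟨9, by norm_num, ?_⟩
  intro N instN hN a a₀ d L hP
  haveI := Fact.mk hN
  have hN1 : 1 ≤ N := hN.one_lt.le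
  have hNr : (0:ℝ) < N := by exact_mod_cast hN.pos
  have hU : 0 ≤ gowersNorm N 2 a := by
    rw [gowers_eq]
    positivity
  set Q : Finset ℕ := (Finset.range L).image (fun k => a₀ + k * d) with hQ
  have hQsub : Q ⊆ Finset.Icc 1 N := by
    intro n hn
    rw [hQ, Finset.mem_image] at hn
    obtain ⟨k, hk, rfl⟩ := hn
    exact hP k (Finset.mem_range.1 hk)
  set S' : Finset (ZMod N) := Q.image (fun n : ℕ => (n : ZMod N)) with hS'
  set b : ZMod N → ℂ := fun x => if x ∈ S' then 1 else 0 with hb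
  have hmodinj : ∀ x ∈ Finset.Icc 1 N, ∀ y ∈ Finset.Icc 1 N, x % N = y % N → x = y := by
    intro x hx y hy hxy
    rw [Finset.mem_Icc] at hx hy
    rcases Nat.lt_or_ge x N with h | h
    · rw [Nat.mod_eq_of_lt h] at hxy
      rcases Nat.lt_or_ge y N with h' | h'
      · rw [Nat.mod_eq_of_lt h'] at hxy; omega
      · have hyN : y = N := by omega
        rw [hyN, Nat.mod_self] at hxy; omega
    · have hxN : x = N := by omega
      rw [hxN, Nat.mod_self] at hxy
      rcases Nat.lt_or_ge y N with h' | h'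
      · rw [Nat.mod_eq_of_lt h'] at hxy; omega
      · have hyN : y = N := by omega
        omega
  have hinjQ : ∀ x ∈ Q, ∀ y ∈ Q, (x : ZMod N) = (y : ZMod N) → x = y := by
    intro x hx y hy h
    rw [ZMod.natCast_eq_natCast_iff'] at h
    exact hmodinj x (hQsub hx) y (hQsub hy) h
  have hnum : (∑ n ∈ Finset.Icc 1 N, if n ∈ Q then a (n : ZMod N) else 0)
      = ∑ x : ZMod N, a x * (starRingEnd ℂ) (b x) := by
    calc ∑ n ∈ Finset.Icc 1 N, (if n ∈ Q then a (n : ZMod N) else 0)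
        = ∑ n ∈ Finset.Icc 1 N ∩ Q, a (n : ZMod N) := Finset.sum_ite_mem _ _ _
      _ = ∑ n ∈ Q, a (n : ZMod N) := by rw [Finset.inter_eq_right.2 hQsub]
      _ = ∑ x ∈ S', a x := (Finset.sum_image hinjQ).symm
      _ = ∑ x : ZMod N, a x * (starRingEnd ℂ) (b x) := by
          rw [hb]
          simp only [apply_ite (starRingEnd ℂ), map_one, map_zero, mul_ite, mul_one, mul_zero]
          rw [Finset.sum_ite_mem Finset.univ S' a, Finset.univ_inter]
  have hdftb : ∀ ξ : ZMod N, dftc b ξ = ∑ x ∈ S', ZMod.stdAddChar (-(x * ξ)) := by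
    intro ξ
    rw [dftc, hb]
    simp only [mul_ite, mul_one, mul_zero]
    rw [Finset.sum_ite_mem Finset.univ S' (fun x => ZMod.stdAddChar (-(x * ξ))),
      Finset.univ_inter]
  have hbbound : ∑ ξ : ZMod N, ‖dftc b ξ‖ ^ ((4:ℝ)/3) ≤ 9 * (N:ℝ) ^ ((4:ℝ)/3) := by
    rcases Nat.eq_zero_or_pos L with hL0 | hLpos
    · have hQe : Q = ∅ := by rw [hQ, hL0]; simp
      have hz : ∀ ξ : ZMod N, ‖dftc b ξ‖ ^ ((4:ℝ)/3) = 0 := by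
        intro ξ
        rw [hdftb, hS', hQe]
        rw [Finset.image_empty, Finset.sum_empty, norm_zero]
        exact Real.zero_rpow (by norm_num)
      rw [Finset.sum_congr rfl fun ξ _ => hz ξ, Finset.sum_const, smul_zero]
      positivity
    · rcases eq_or_ne (d : ZMod N) 0 with hd0 | hd0
      · have hSs : S' = {(a₀ : ZMod N)} := by
          rw [hS', hQ, Finset.image_image]
          have hconst : ((fun n : ℕ => (n : ZMod N)) ∘ (fun k => a₀ + k * d))
              = fun _ : ℕ => (a₀ : ZMod N) := by
            funext k
            simp only [Function.comp_apply]
            push_cast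
            rw [hd0]
            ring
          rw [hconst, Finset.image_const (Finset.nonempty_range_iff.2 (by omega))]
        have hone : ∀ ξ : ZMod N, ‖dftc b ξ‖ ^ ((4:ℝ)/3) = 1 := by
          intro ξ
          rw [hdftb, hSs, Finset.sum_singleton, e_norm, Real.one_rpow]
        rw [Finset.sum_congr rfl fun ξ _ => hone ξ, Finset.sum_const, Finset.card_univ,
          ZMod.card, nsmul_eq_mul, mul_one]
        have h1 : (N:ℝ) = (N:ℝ) ^ (1:ℝ) := (Real.rpow_one _).symm
        have h2 : (N:ℝ) ^ (1:ℝ) ≤ (N:ℝ) ^ ((4:ℝ)/3) :=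
          Real.rpow_le_rpow_of_exponent_le (by exact_mod_cast hN1) (by norm_num)
        have h3 : (0:ℝ) ≤ (N:ℝ) ^ ((4:ℝ)/3) := by positivity
        calc (N:ℝ) = (N:ℝ) ^ (1:ℝ) := h1
          _ ≤ (N:ℝ) ^ ((4:ℝ)/3) := h2
          _ ≤ 9 * (N:ℝ) ^ ((4:ℝ)/3) := le_mul_of_one_le_left h3 (by norm_num)
      · have hd1 : 1 ≤ d := by
          rcases Nat.eq_zero_or_pos d with h | h
          · exfalso; apply hd0; rw [h]; simp
          · exact h
        have ha1 : 1 ≤ a₀ := by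
          have := hP 0 hLpos
          rw [Finset.mem_Icc] at this
          omega
        have hLN : L ≤ N := by
          have hmem := hP (L-1) (by omega)
          rw [Finset.mem_Icc] at hmem
          have h2 : L - 1 ≤ (L-1) * d := Nat.le_mul_of_pos_right _ (by omega)
          omega
        have hSAP : S' = (Finset.range L).image
            (fun k : ℕ => (a₀ : ZMod N) + (k : ZMod N) * (d : ZMod N)) := by
          rw [hS', hQ, Finset.image_image]
          congr 1
          funext k
          simp only [Function.comp_apply]
          push_cast
          ring
        have := dft_AP_bound hN (a₀ : ZMod N) (d : ZMod N) hd0 L hLN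
        rw [Finset.sum_congr rfl fun ξ _ => by rw [hdftb, hSAP]]
        exact this
  -- Hölder step
  have hpq : Real.HolderConjugate 4 (4/3) := by constructor <;> norm_num
  have hhold : ‖∑ ξ : ZMod N, dftc a ξ * (starRingEnd ℂ) (dftc b ξ)‖
      ≤ ((N:ℝ) * gowersNorm N 2 a) * (9 * (N:ℝ) ^ ((4:ℝ)/3)) ^ ((3:ℝ)/4) := by
    have s1 : ‖∑ ξ : ZMod N, dftc a ξ * (starRingEnd ℂ) (dftc b ξ)‖
        ≤ ∑ ξ : ZMod N, ‖dftc a ξ‖ * ‖dftc b ξ‖ := by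
      refine (norm_sum_le _ _).trans (le_of_eq ?_)
      refine Finset.sum_congr rfl fun ξ _ => ?_
      rw [norm_mul, RCLike.norm_conj]
    have s2 := Real.inner_le_Lp_mul_Lq_of_nonneg Finset.univ hpq
      (fun ξ _ => norm_nonneg (dftc a ξ)) (fun ξ _ => norm_nonneg (dftc b ξ))
    have s3 : (∑ ξ : ZMod N, ‖dftc a ξ‖ ^ (4:ℝ)) ^ ((1:ℝ)/4)
        = (N:ℝ) * gowersNorm N 2 a := by
      rw [← gowers_rpow a]
      congr 1
      refine Finset.sum_congr rfl fun ξ _ => ?_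
      rw [show (4:ℝ) = ((4:ℕ):ℝ) by norm_num, Real.rpow_natCast]
    have s4 : (∑ ξ : ZMod N, ‖dftc b ξ‖ ^ ((4:ℝ)/3)) ^ ((1:ℝ)/(4/3))
        ≤ (9 * (N:ℝ) ^ ((4:ℝ)/3)) ^ ((3:ℝ)/4) := by
      rw [show (1:ℝ)/(4/3) = (3:ℝ)/4 by norm_num]
      exact Real.rpow_le_rpow (Finset.sum_nonneg fun ξ _ => by positivity) hbbound
        (by norm_num)
    calc ‖∑ ξ : ZMod N, dftc a ξ * (starRingEnd ℂ) (dftc b ξ)‖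
        ≤ ∑ ξ : ZMod N, ‖dftc a ξ‖ * ‖dftc b ξ‖ := s1
      _ ≤ (∑ ξ : ZMod N, ‖dftc a ξ‖ ^ (4:ℝ)) ^ ((1:ℝ)/4)
          * (∑ ξ : ZMod N, ‖dftc b ξ‖ ^ ((4:ℝ)/3)) ^ ((1:ℝ)/(4/3)) := s2
      _ ≤ ((N:ℝ) * gowersNorm N 2 a) * (9 * (N:ℝ) ^ ((4:ℝ)/3)) ^ ((3:ℝ)/4) := by
          rw [s3]
          refine mul_le_mul_of_nonneg_left s4 ?_
          positivity
  -- assemble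
  have hpair := pairing a b
  have hnorm_num : (N:ℝ) * ‖∑ x : ZMod N, a x * (starRingEnd ℂ) (b x)‖
      = ‖∑ ξ : ZMod N, dftc a ξ * (starRingEnd ℂ) (dftc b ξ)‖ := by
    rw [hpair, norm_mul, Complex.norm_natCast]
  have hconst : (9 * (N:ℝ) ^ ((4:ℝ)/3)) ^ ((3:ℝ)/4) ≤ 9 * (N:ℝ) := by
    rw [Real.mul_rpow (by norm_num) (by positivity)]
    have c1 : ((N:ℝ) ^ ((4:ℝ)/3)) ^ ((3:ℝ)/4) = (N:ℝ) := by
      rw [← Real.rpow_mul hNr.le]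
      norm_num
    rw [c1]
    have c2 : (9:ℝ) ^ ((3:ℝ)/4) ≤ 9 := by
      have := Real.rpow_le_rpow_of_exponent_le (by norm_num : (1:ℝ) ≤ 9)
        (by norm_num : (3:ℝ)/4 ≤ 1)
      rwa [Real.rpow_one] at this
    nlinarith
  rw [norm_div, Complex.norm_natCast, hnum]
  rw [div_le_iff₀ hNr]
  have hfin : (N:ℝ) * ((N:ℝ) * ‖∑ x : ZMod N, a x * (starRingEnd ℂ) (b x)‖)
      ≤ (N:ℝ) * (((N:ℝ) * gowersNorm N 2 a) * (9 * (N:ℝ) ^ ((4:ℝ)/3)) ^ ((3:ℝ)/4)) := by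
    rw [hnorm_num]
    exact mul_le_mul_of_nonneg_left hhold hNr.le
  have hub : ((N:ℝ) * gowersNorm N 2 a) * (9 * (N:ℝ) ^ ((4:ℝ)/3)) ^ ((3:ℝ)/4)
      ≤ (N:ℝ) * gowersNorm N 2 a * (9 * N) :=
    mul_le_mul_of_nonneg_left hconst (by positivity)
  nlinarith [norm_nonneg (∑ x : ZMod N, a x * (starRingEnd ℂ) (b x))]
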